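/- For a set X with an endofunction f : X → X, if X is nonempty and for all x, y ∈ X there exist natural numbers n, m with f^n(x) = f^m(y), then X cannot be written as a disjoint union of two nonempty f-invariant subsets (i.e., subsets S with f(S) ⊆ S). -/
import Mathlib

theorem stmt_0 {X : Type*} (f : X → X) (hne : Nonempty X)
    (hconn : ∀ x y : X, ∃ n m : ℕ, f^[n] x = f^[m] y) :
    ¬ ∃ S T : Set X, S.Nonempty ∧ T.Nonempty ∧
      (∀ x ∈ S, f x ∈ S) ∧ (∀ x ∈ T, f x ∈ T) ∧
      Disjoint S T ∧ S ∪ T = Set.univ := by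
  rintro ⟨S, T, ⟨s, hs⟩, ⟨t, ht⟩, hS, hT, hdisj, -⟩
  obtain ⟨n, m, h⟩ := hconn s t
  have hiS : ∀ k, f^[k] s ∈ S := by
    intro k; induction k with
    | zero => exact hs
    | succ k ih => rw [Function.iterate_succ_apply']; exact hS _ ih
  have hiT : ∀ k, f^[k] t ∈ T := by
    intro k; induction k with
    | zero => exact ht
    | succ k ih => rw [Function.iterate_succ_apply']; exact hT _ ih
  exact hdisj.ne_of_mem (hiS n) (hiT m) h
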